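/- Let 𝓛 be a finite field extension of a standard d-dimensional local field, with system of local uniformizers T_1,…,T_{d−1}, π_𝓛, and fix n ≥ 1. Set J_n = { ī = (i_1,…,i_{d−1}) : 0 ≤ i_1,…,i_{d−1} < p^n }. Then every x ∈ O_𝓛 can be written as a v_𝓛-convergent series x = Σ_{k=0}^∞ Σ_{ī ∈ J_n} γ_{ī,k}^{p^n} · T_1^{i_1}⋯T_{d−1}^{i_{d−1}} · π_𝓛^k for suitable elements γ_{ī,k} ∈ O_𝓛, i.e. for every m ≥ 0 the difference between x and the partial sum over k ≤ m lies in π_𝓛^{m+1}O_𝓛. -/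

import Mathlib

/-- Axioms for a (rank-one) discrete valuation `v` on a field `F`, written additively with
`v 0 = ⊤` and value group `ℤ`. -/
structure IsDiscVal {F : Type*} [Field F] (v : F → WithTop ℤ) : Prop where
  eq_top_iff : ∀ x, v x = ⊤ ↔ x = 0
  map_mul : ∀ x y, v (x * y) = v x + v y
  min_le_add : ∀ x y, min (v x) (v y) ≤ v (x + y)
  exists_uniformizer : ∃ x, v x = 1

namespace IsDiscVal

variable {F : Type*} [Field F] {v : F → WithTop ℤ}

theorem v_one (hv : IsDiscVal v) : v 1 = 0 := by
  have h1 : v 1 ≠ ⊤ := fun h => one_ne_zero ((hv.eq_top_iff 1).mp h)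
  obtain ⟨n, hn⟩ := WithTop.ne_top_iff_exists.mp h1
  have hmul := hv.map_mul 1 1
  rw [mul_one, ← hn] at hmul
  have hn0 : n = n + n := by exact_mod_cast hmul
  have : n = 0 := by omega
  simp [← hn, this]

theorem v_neg_one (hv : IsDiscVal v) : v (-1) = 0 := by
  have h1 : v (-1) ≠ ⊤ := fun h => (by simp : (-1 : F) ≠ 0) ((hv.eq_top_iff (-1)).mp h)
  obtain ⟨n, hn⟩ := WithTop.ne_top_iff_exists.mp h1
  have hmul := hv.map_mul (-1) (-1)
  rw [neg_one_mul, neg_neg, hv.v_one, ← hn] at hmul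
  have hn0 : n + n = (0 : ℤ) := by exact_mod_cast hmul.symm
  have : n = 0 := by omega
  simp [← hn, this]

theorem v_neg (hv : IsDiscVal v) (x : F) : v (-x) = v x := by
  have h := hv.map_mul (-1) x
  rw [neg_one_mul, hv.v_neg_one, zero_add] at h
  exact h

theorem v_zero (hv : IsDiscVal v) : v 0 = ⊤ := (hv.eq_top_iff 0).mpr rfl

/-- The valuation (sub)ring `O = {x | v x ≥ 0}` of a discretely valued field. -/
noncomputable def subring (hv : IsDiscVal v) : Subring F where
  carrier := {x | 0 ≤ v x}
  zero_mem' := by simp only [Set.mem_setOf_eq, hv.v_zero]; exact le_top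
  one_mem' := by simp [Set.mem_setOf_eq, hv.v_one]
  add_mem' := fun {a b} ha hb => le_trans (le_min ha hb) (hv.min_le_add a b)
  mul_mem' := fun {a b} ha hb => by
    simpa [Set.mem_setOf_eq, hv.map_mul a b] using add_nonneg ha hb
  neg_mem' := fun {a} ha => by
    simpa only [Set.mem_setOf_eq, hv.v_neg a] using ha

theorem mem_subring_iff (hv : IsDiscVal v) (x : F) : x ∈ hv.subring ↔ 0 ≤ v x := Iff.rfl

end IsDiscVal

section LaurentTower
/-!  The iterated Laurent series tower `E_0 = 𝔽`, `E_{j+1} = E_j((T_{j+1}))`, presented as a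
family of fields `E j` with isomorphisms `E (j+1) ≃+* LaurentSeries (E j)`. -/

variable (E : ℕ → Type) [∀ j, Field (E j)]
variable (estep : ∀ j, E (j + 1) ≃+* LaurentSeries (E j))

/-- The constant-coefficient embedding `E_m → E_{m+1}`. -/
noncomputable def stepEmb (m : ℕ) : E m →+* E (m + 1) :=
  ((estep m).symm : LaurentSeries (E m) →+* E (m + 1)).comp
    (HahnSeries.C : E m →+* LaurentSeries (E m))

/-- The iterated constant-coefficient embedding `E_m → E_{m+j}`. -/
noncomputable def upEmb (m : ℕ) : ∀ j : ℕ, E m →+* E (m + j)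
  | 0 => RingHom.id _
  | j + 1 => (stepEmb E estep (m + j)).comp (upEmb m j)

/-- The variable `T_{j+1}` of the `(j+1)`-st layer, viewed in `E_D` (for `j < D`). -/
noncomputable def towerVar (D j : ℕ) (_h : j < D) : E D :=
  cast (congrArg E (by omega : (j + 1) + (D - (j + 1)) = D))
    (upEmb E estep (j + 1) (D - (j + 1))
      ((estep j).symm (HahnSeries.single (1 : ℤ) (1 : E j))))

end LaurentTower


section HahnFrobenius

variable {R : Type*} [CommRing R]

theorem hs_coeff_sum {α : Type*} (s : Finset α) (f : α → HahnSeries ℤ R) (a : ℤ) :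
    (∑ i ∈ s, f i).coeff a = ∑ i ∈ s, (f i).coeff a := by
  classical
  induction s using Finset.induction with
  | empty => simp
  | insert _ _ h ih =>
    rw [Finset.sum_insert h, Finset.sum_insert h, HahnSeries.coeff_add, ih]

theorem hs_mul_coeff_eq_zero {x y : HahnSeries ℤ R} {A B c : ℤ}
    (hx : ∀ a < A, x.coeff a = 0) (hy : ∀ b < B, y.coeff b = 0) (hc : c < A + B) :
    (x * y).coeff c = 0 := by
  rw [HahnSeries.coeff_mul]
  refine Finset.sum_eq_zero fun ij hij => ?_
  rw [Finset.mem_addAntidiagonal] at hij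
  have hsum := hij.2.2
  rcases lt_or_ge ij.1 A with h | h
  · rw [hx _ h, zero_mul]
  · rw [hy _ (by omega), mul_zero]

theorem hs_pow_coeff_eq_zero {x : HahnSeries ℤ R} {B : ℤ}
    (hx : ∀ a < B, x.coeff a = 0) (e : ℕ) :
    ∀ c < (e : ℤ) * B, (x ^ e).coeff c = 0 := by
  induction e with
  | zero =>
    intro c hc
    rw [pow_zero]
    have hc0 : c ≠ 0 := by push_cast at hc; omega
    rw [HahnSeries.coeff_one, if_neg hc0]
  | succ e ih =>
    intro c hc
    rw [pow_succ]
    refine hs_mul_coeff_eq_zero ih hx ?_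
    have : ((e : ℤ) + 1) * B = (e : ℤ) * B + B := by ring
    push_cast at hc
    omega

theorem hs_charP (p : ℕ) [CharP R p] : CharP (HahnSeries ℤ R) p :=
  charP_of_injective_ringHom (f := (HahnSeries.C : R →+* HahnSeries ℤ R))
    HahnSeries.C_injective p

theorem hs_sum_single_pow {p : ℕ} [Fact p.Prime] [CharP R p] {α : Type*} [DecidableEq α]
    (s : Finset α) (c : α → R) (d : α → ℤ) :
    (∑ a ∈ s, HahnSeries.single (d a) (c a)) ^ p
      = ∑ a ∈ s, HahnSeries.single ((p : ℤ) * d a) (c a ^ p) := by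
  haveI := hs_charP (R := R) p
  have hp0 : p ≠ 0 := (Fact.out (p := p.Prime)).ne_zero
  induction s using Finset.induction with
  | empty => simp [zero_pow hp0]
  | insert _ _ h ih =>
    rw [Finset.sum_insert h, add_pow_char, ih, Finset.sum_insert h,
      HahnSeries.single_pow]
    congr 2

theorem hs_pow_char_coeff {p : ℕ} [Fact p.Prime] [CharP R p] (g : HahnSeries ℤ R) (t : ℤ) :
    (g ^ p).coeff t = if (p : ℤ) ∣ t then (g.coeff (t / (p : ℤ))) ^ p else 0 := by
  classical
  haveI := hs_charP (R := R) p
  have hp0 : p ≠ 0 := (Fact.out (p := p.Prime)).ne_zero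
  have hp1 : (1 : ℤ) ≤ (p : ℤ) := by exact_mod_cast Nat.one_le_iff_ne_zero.mpr hp0
  by_cases hg : g = 0
  · subst hg
    rw [zero_pow hp0]
    simp only [HahnSeries.coeff_zero, zero_pow hp0]
    exact (ite_self _).symm
  set N := g.order with hN
  have hNz : ∀ a < N, g.coeff a = 0 := fun a ha => HahnSeries.coeff_eq_zero_of_lt_order ha
  set M : ℤ := max (max N (t / (p : ℤ))) (max t 0) with hM
  set s : Finset ℤ := Finset.Icc N M with hs
  set g' := ∑ a ∈ s, HahnSeries.single a (g.coeff a) with hg'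
  have hcoe : ∀ a : ℤ, g'.coeff a = if a ∈ s then g.coeff a else 0 := by
    intro a
    rw [hg', hs_coeff_sum]
    simp only [HahnSeries.coeff_single]
    by_cases hmem : a ∈ s
    · rw [if_pos hmem]
      exact (Finset.sum_eq_single_of_mem a hmem
        (fun b _ hb => if_neg fun h : a = b => hb h.symm)).trans (if_pos rfl)
    · rw [if_neg hmem]
      exact Finset.sum_eq_zero fun b hb => if_neg fun h : a = b => hmem (h.symm ▸ hb)
  have hh : ∀ a < M + 1, (g - g').coeff a = 0 := by
    intro a ha
    rw [HahnSeries.coeff_sub, hcoe]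
    by_cases hmem : a ∈ s
    · rw [if_pos hmem, sub_self]
    · rw [if_neg hmem, sub_zero]
      have : a < N := by
        rw [hs, Finset.mem_Icc] at hmem
        omega
      exact hNz a this
  have hsplit : g = g' + (g - g') := by ring
  have hMt : t < (p : ℤ) * (M + 1) := by
    have h1 : t ≤ M := by rw [hM]; exact le_max_of_le_right (le_max_left _ _)
    have h2 : (0 : ℤ) ≤ M := by rw [hM]; exact le_max_of_le_right (le_max_right _ _)
    nlinarith
  have hkey : (g ^ p).coeff t = (g' ^ p).coeff t := by
    conv_lhs => rw [hsplit]
    rw [add_pow_char, HahnSeries.coeff_add, hs_pow_coeff_eq_zero hh p t hMt, add_zero]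
  rw [hkey, hg', hs_sum_single_pow, hs_coeff_sum]
  simp only [HahnSeries.coeff_single]
  by_cases hdvd : (p : ℤ) ∣ t
  · rw [if_pos hdvd]
    have hiff : ∀ a : ℤ, (t = (p : ℤ) * a) ↔ (a = t / (p : ℤ)) := by
      intro a
      constructor
      · rintro rfl
        rw [Int.mul_ediv_cancel_left _ (by exact_mod_cast hp0)]
      · rintro rfl
        exact (Int.mul_ediv_cancel' hdvd).symm
    by_cases hmem : t / (p : ℤ) ∈ s
    · exact (Finset.sum_eq_single_of_mem (t / (p : ℤ)) hmem
        (fun b _ hb => if_neg fun h : t = (p : ℤ) * b => hb ((hiff b).mp h))).trans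
        (if_pos ((hiff _).mpr rfl))
    · have hlt : t / (p : ℤ) < N := by
        have h1 : t / (p : ℤ) ≤ M := by
          rw [hM]; exact le_max_of_le_left (le_max_right _ _)
        rw [hs, Finset.mem_Icc] at hmem
        omega
      rw [hNz _ hlt, zero_pow hp0]
      exact Finset.sum_eq_zero fun b hb =>
        if_neg fun h : t = (p : ℤ) * b => hmem (((hiff b).mp h) ▸ hb)
  · rw [if_neg hdvd]
    refine Finset.sum_eq_zero fun a _ => ?_
    rw [if_neg]
    rintro rfl
    exact hdvd ⟨a, rfl⟩

theorem hs_pow_char_pow_coeff {p : ℕ} [Fact p.Prime] [CharP R p] (n : ℕ)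
    (g : HahnSeries ℤ R) (t : ℤ) :
    (g ^ p ^ n).coeff t
      = if (p : ℤ) ^ n ∣ t then (g.coeff (t / (p : ℤ) ^ n)) ^ p ^ n else 0 := by
  have hp0 : p ≠ 0 := (Fact.out (p := p.Prime)).ne_zero
  have hpz : (p : ℤ) ≠ 0 := by exact_mod_cast hp0
  induction n generalizing t with
  | zero => simp
  | succ n ih =>
    have hpow : g ^ p ^ (n + 1) = (g ^ p ^ n) ^ p := by
      rw [← pow_mul, pow_succ]
    rw [hpow, hs_pow_char_coeff, ih]
    by_cases hpt : (p : ℤ) ∣ t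
    · rw [if_pos hpt]
      obtain ⟨u, rfl⟩ := hpt
      have h1 : (p : ℤ) * u / (p : ℤ) = u := Int.mul_ediv_cancel_left _ hpz
      rw [h1]
      by_cases h2 : (p : ℤ) ^ n ∣ u
      · obtain ⟨w, rfl⟩ := h2
        have hd : (p : ℤ) ^ (n + 1) ∣ (p : ℤ) * ((p : ℤ) ^ n * w) :=
          ⟨w, by ring⟩
        rw [if_pos ⟨w, rfl⟩, if_pos hd]
        have h3 : (p : ℤ) ^ n * w / (p : ℤ) ^ n = w :=
          Int.mul_ediv_cancel_left _ (pow_ne_zero n hpz)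
        have h4 : (p : ℤ) * ((p : ℤ) ^ n * w) / (p : ℤ) ^ (n + 1) = w := by
          rw [show (p : ℤ) * ((p : ℤ) ^ n * w) = (p : ℤ) ^ (n + 1) * w by ring]
          exact Int.mul_ediv_cancel_left _ (pow_ne_zero (n + 1) hpz)
        rw [h3, h4, ← pow_mul, ← pow_succ]
      · have hnd : ¬ (p : ℤ) ^ (n + 1) ∣ (p : ℤ) * u := by
          rintro ⟨w, hw⟩
          refine h2 ⟨w, mul_left_cancel₀ hpz ?_⟩
          rw [hw]; ring
        rw [if_neg h2, if_neg hnd, zero_pow hp0]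
    · rw [if_neg hpt, if_neg fun h => hpt (dvd_trans ⟨(p : ℤ) ^ n, by ring⟩ h)]

end HahnFrobenius



section TowerLemmas

variable (E : ℕ → Type) [∀ j, Field (E j)]
variable (estep : ∀ j, E (j + 1) ≃+* LaurentSeries (E j))


theorem stepEmb_injective (m : ℕ) : Function.Injective (stepEmb E estep m) := by
  intro a b hab
  apply HahnSeries.C_injective (Γ := ℤ)
  exact (estep m).symm.injective.eq_iff.mp hab

theorem estep_stepEmb (m : ℕ) (x : E m) :
    estep m (stepEmb E estep m x) = HahnSeries.C x := by
  simp [stepEmb]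

theorem towerVar_heq (D j : ℕ) (h : j < D) :
    HEq (towerVar E estep D j h)
      (upEmb E estep (j + 1) (D - (j + 1))
        ((estep j).symm (HahnSeries.single (1 : ℤ) (1 : E j)))) := by
  unfold towerVar
  exact cast_heq _ _

theorem upEmb_heq_congr (m : ℕ) {a b : ℕ} (h : a = b) (x : E m) :
    HEq (upEmb E estep m a x) (upEmb E estep m b x) := by subst h; rfl

theorem stepEmb_heq_congr {a b : ℕ} (h : a = b) {x : E a} {y : E b} (hxy : HEq x y) :
    HEq (stepEmb E estep a x) (stepEmb E estep b y) := by
  subst h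
  rw [eq_of_heq hxy]

theorem towerVar_last (D : ℕ) (h : D < D + 1) :
    towerVar E estep (D + 1) D h
      = (estep D).symm (HahnSeries.single (1 : ℤ) (1 : E D)) := by
  have h1 := towerVar_heq E estep (D + 1) D h
  have h2 := upEmb_heq_congr E estep (D + 1)
    (show (D + 1) - (D + 1) = 0 by omega)
    ((estep D).symm (HahnSeries.single (1 : ℤ) (1 : E D)))
  exact eq_of_heq (h1.trans h2)

theorem towerVar_castSucc (D j : ℕ) (hj : j < D) (h' : j < D + 1) :
    towerVar E estep (D + 1) j h' = stepEmb E estep D (towerVar E estep D j hj) := by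
  set t := (estep j).symm (HahnSeries.single (1 : ℤ) (1 : E j)) with ht
  have hk : (D + 1) - (j + 1) = (D - (j + 1)) + 1 := by omega
  have h1 := towerVar_heq E estep (D + 1) j h'
  have h2 := upEmb_heq_congr E estep (j + 1) hk t
  have h3 : upEmb E estep (j + 1) ((D - (j + 1)) + 1) t
      = stepEmb E estep ((j + 1) + (D - (j + 1))) (upEmb E estep (j + 1) (D - (j + 1)) t) :=
    rfl
  have h4 : HEq (stepEmb E estep ((j + 1) + (D - (j + 1))) (upEmb E estep (j + 1) (D - (j + 1)) t))
      (stepEmb E estep D (towerVar E estep D j hj)) :=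
    stepEmb_heq_congr E estep (show (j + 1) + (D - (j + 1)) = D by omega)
      ((towerVar_heq E estep D j hj).symm)
  have h5 : HEq (upEmb E estep (j + 1) ((D - (j + 1)) + 1) t)
      (stepEmb E estep D (towerVar E estep D j hj)) := by rw [h3]; exact h4
  exact eq_of_heq ((h1.trans h2).trans h5)

include estep in
theorem charP_E (p : ℕ) (𝔽 : Type) [Field 𝔽] [CharP 𝔽 p] (e0 : E 0 ≃+* 𝔽) :
    ∀ j, CharP (E j) p := by
  intro j
  induction j with
  | zero => exact charP_of_injective_ringHom (f := e0.symm.toRingHom) e0.symm.injective p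
  | succ j ih =>
    haveI := ih
    exact charP_of_injective_ringHom (stepEmb_injective E estep j) p

end TowerLemmas


section TowerDecomp

variable (E : ℕ → Type) [∀ j, Field (E j)]
variable (estep : ∀ j, E (j + 1) ≃+* LaurentSeries (E j))

theorem towerDecomp (p : ℕ) (hp : Fact p.Prime) (n : ℕ)
    (𝔽 : Type) [Field 𝔽] [Fintype 𝔽] [CharP 𝔽 p] (e0 : E 0 ≃+* 𝔽) :
    ∀ (D : ℕ) (y : E D), ∃ c : (Fin D → Fin (p ^ n)) → E D,
      y = ∑ iv : Fin D → Fin (p ^ n), (c iv) ^ (p ^ n) *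
        ∏ j : Fin D, towerVar E estep D (j : ℕ) j.isLt ^ ((iv j : ℕ)) := by
  haveI := hp
  have hq0 : p ^ n ≠ 0 := pow_ne_zero n hp.out.ne_zero
  have hqz : (((p ^ n : ℕ) : ℤ)) ≠ 0 := by exact_mod_cast hq0
  have hqpos : (0 : ℤ) < ((p ^ n : ℕ) : ℤ) := by positivity
  intro D
  induction D with
  | zero =>
    intro y
    haveI : CharP (E 0) p := charP_E E estep p 𝔽 e0 0
    haveI : Finite (E 0) := Finite.of_equiv 𝔽 e0.toEquiv.symm
    have hinj : Function.Injective (fun a : E 0 => a ^ p ^ n) := by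
      intro a b hab
      have h1 : (a - b) ^ p ^ n = 0 := by
        rw [sub_pow_char_pow, sub_eq_zero]
        exact hab
      have h2 : a - b = 0 := pow_eq_zero_iff hq0 |>.mp h1
      exact sub_eq_zero.mp h2
    obtain ⟨c, hc⟩ := Finite.injective_iff_surjective.mp hinj y
    refine ⟨fun _ => c, ?_⟩
    haveI : Unique (Fin 0 → Fin (p ^ n)) :=
      ⟨⟨fun i => i.elim0⟩, fun f => funext fun i => i.elim0⟩
    rw [Fintype.sum_unique]
    simp only [Fin.prod_univ_zero, mul_one]
    exact hc.symm
  | succ D IH =>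
    intro y
    haveI : CharP (E D) p := charP_E E estep p 𝔽 e0 D
    haveI : CharP (LaurentSeries (E D)) p := hs_charP p
    classical
    obtain ⟨F, hF0, hFspec⟩ :
        ∃ F : E D → (Fin D → Fin (p ^ n)) → E D,
          (∀ iv, F 0 iv = 0) ∧
          ∀ a : E D, a = ∑ iv : Fin D → Fin (p ^ n), (F a iv) ^ (p ^ n) *
            ∏ j : Fin D, towerVar E estep D (j : ℕ) j.isLt ^ ((iv j : ℕ)) := by
      choose F hF using IH
      refine ⟨fun a => if a = 0 then (fun _ => 0) else F a, fun iv => by simp, fun a => ?_⟩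
      by_cases ha : a = 0
      · subst ha
        refine (Finset.sum_eq_zero fun iv _ => ?_).symm
        simp [zero_pow hq0]
      · simp only [if_neg ha]
        exact hF a
    set f : LaurentSeries (E D) := estep D y with hf
    have hGsupp : ∀ (iv' : Fin D → Fin (p ^ n)) (i : Fin (p ^ n)),
        (Function.support fun m' : ℤ =>
          F (f.coeff (((p ^ n : ℕ) : ℤ) * m' + ((i : ℕ) : ℤ))) iv').IsPWO := by
      intro iv' i
      have hmono : Monotone (fun m : ℤ => (m - ((i : ℕ) : ℤ)) / ((p ^ n : ℕ) : ℤ)) := by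
        intro a b hab
        exact Int.ediv_le_ediv hqpos (by omega)
      refine Set.IsPWO.mono (f.isPWO_support.image_of_monotone hmono) ?_
      intro m' hm'
      have hne : f.coeff (((p ^ n : ℕ) : ℤ) * m' + ((i : ℕ) : ℤ)) ≠ 0 := by
        intro h0
        apply hm'
        show F (f.coeff (((p ^ n : ℕ) : ℤ) * m' + ((i : ℕ) : ℤ))) iv' = 0
        rw [h0]
        exact hF0 iv'
      refine ⟨((p ^ n : ℕ) : ℤ) * m' + ((i : ℕ) : ℤ), hne, ?_⟩
      simp only [add_sub_cancel_right]
      exact Int.mul_ediv_cancel_left _ hqz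
    set G : (Fin D → Fin (p ^ n)) → Fin (p ^ n) → LaurentSeries (E D) := fun iv' i =>
      ⟨fun m' => F (f.coeff (((p ^ n : ℕ) : ℤ) * m' + ((i : ℕ) : ℤ))) iv', hGsupp iv' i⟩
      with hG
    have hGcoeff : ∀ (iv' : Fin D → Fin (p ^ n)) (i : Fin (p ^ n)) (m' : ℤ),
        (G iv' i).coeff m' = F (f.coeff (((p ^ n : ℕ) : ℤ) * m' + ((i : ℕ) : ℤ))) iv' :=
      fun _ _ _ => rfl
    refine ⟨fun iv => (estep D).symm (G (fun j => iv j.castSucc) (iv (Fin.last D))), ?_⟩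
    apply (estep D).injective
    rw [map_sum, ← hf]
    have hterm : ∀ iv : Fin (D + 1) → Fin (p ^ n),
        estep D ((estep D).symm (G (fun j => iv j.castSucc) (iv (Fin.last D))) ^ (p ^ n) *
            ∏ j : Fin (D + 1), towerVar E estep (D + 1) (j : ℕ) j.isLt ^ ((iv j : ℕ)))
        = (G (fun j => iv j.castSucc) (iv (Fin.last D))) ^ (p ^ n) *
            HahnSeries.C (∏ j : Fin D,
              towerVar E estep D (j : ℕ) j.isLt ^ ((iv j.castSucc : ℕ))) *
            HahnSeries.single (((iv (Fin.last D) : ℕ) : ℤ)) 1 := by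
      intro iv
      rw [map_mul, map_pow, RingEquiv.apply_symm_apply, mul_assoc]
      congr 1
      rw [Fin.prod_univ_castSucc, map_mul]
      congr 1
      · rw [map_prod, map_prod]
        refine Finset.prod_congr rfl fun j _ => ?_
        rw [map_pow, map_pow]
        congr 1
        have hc : ((j.castSucc : Fin (D + 1)) : ℕ) = (j : ℕ) := Fin.coe_castSucc j
        have h1 : towerVar E estep (D + 1) ((j.castSucc : Fin (D + 1)) : ℕ) (j.castSucc).isLt
            = stepEmb E estep D (towerVar E estep D (j : ℕ) j.isLt) := by
          simp only [Fin.coe_castSucc]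
          exact towerVar_castSucc E estep D (j : ℕ) j.isLt (by omega)
        rw [h1, estep_stepEmb]
      · have h2 : ((Fin.last D : Fin (D + 1)) : ℕ) = D := Fin.val_last D
        rw [map_pow]
        have h3 : towerVar E estep (D + 1) ((Fin.last D : Fin (D + 1)) : ℕ) (Fin.last D).isLt
            = (estep D).symm (HahnSeries.single (1 : ℤ) (1 : E D)) := by
          simp only [Fin.val_last]
          exact towerVar_last E estep D (by omega)
        rw [h3, RingEquiv.apply_symm_apply, HahnSeries.single_pow]
        simp [nsmul_eq_mul]
    rw [Finset.sum_congr rfl fun iv _ => hterm iv]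
    rw [← Equiv.sum_comp (Fin.snocEquiv (fun _ : Fin (D + 1) => Fin (p ^ n)))]
    simp only [Fin.snocEquiv_apply, Fin.snoc_castSucc, Fin.snoc_last]
    rw [Fintype.sum_prod_type]
    apply HahnSeries.ext
    funext m
    rw [hs_coeff_sum]
    rw [Finset.sum_congr rfl fun i (_ : i ∈ Finset.univ) => hs_coeff_sum _ _ m]
    -- coefficient of each term
    have hco : ∀ (i : Fin (p ^ n)) (iv' : Fin D → Fin (p ^ n)),
        ((G (fun j => iv' j) i) ^ (p ^ n) *
          HahnSeries.C (∏ j : Fin D, towerVar E estep D (j : ℕ) j.isLt ^ ((iv' j : ℕ))) *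
          HahnSeries.single (((i : ℕ) : ℤ)) 1).coeff m
        = (if (((p ^ n : ℕ) : ℤ)) ∣ (m - ((i : ℕ) : ℤ)) then
            (F (f.coeff (((p ^ n : ℕ) : ℤ) * ((m - ((i : ℕ) : ℤ)) / ((p ^ n : ℕ) : ℤ))
              + ((i : ℕ) : ℤ))) iv') ^ (p ^ n) else 0) *
          (∏ j : Fin D, towerVar E estep D (j : ℕ) j.isLt ^ ((iv' j : ℕ))) := by
      intro i iv'
      conv_lhs => rw [show m = (m - ((i : ℕ) : ℤ)) + ((i : ℕ) : ℤ) by ring]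
      rw [HahnSeries.coeff_mul_single_add, mul_one, HahnSeries.C_apply,
        HahnSeries.coeff_mul_single_zero]
      congr 1
      rw [hs_pow_char_pow_coeff, hGcoeff]
      norm_cast
    rw [Finset.sum_congr rfl fun i (_ : i ∈ Finset.univ) =>
      Finset.sum_congr rfl fun iv' (_ : iv' ∈ Finset.univ) => hco i iv']
    -- only the residue i₀ of m mod p^n contributes
    have hmod1 : (0 : ℤ) ≤ m % ((p ^ n : ℕ) : ℤ) := Int.emod_nonneg m hqz
    have hmod2 : m % ((p ^ n : ℕ) : ℤ) < ((p ^ n : ℕ) : ℤ) := Int.emod_lt_of_pos m hqpos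
    set i₀ : Fin (p ^ n) := ⟨(m % ((p ^ n : ℕ) : ℤ)).toNat, by omega⟩ with hi₀def
    have hi₀ : ((i₀ : ℕ) : ℤ) = m % ((p ^ n : ℕ) : ℤ) :=
      Int.toNat_of_nonneg hmod1
    have hd0 : (((p ^ n : ℕ) : ℤ)) ∣ (m - ((i₀ : ℕ) : ℤ)) := by
      refine ⟨m / ((p ^ n : ℕ) : ℤ), ?_⟩
      have h := Int.mul_ediv_add_emod m ((p ^ n : ℕ) : ℤ)
      rw [hi₀]
      linarith
    rw [Finset.sum_eq_single_of_mem i₀ (Finset.mem_univ _) ?side]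
    case side =>
      intro i _ hne
      refine Finset.sum_eq_zero fun iv' _ => ?_
      have hndvd : ¬ (((p ^ n : ℕ) : ℤ)) ∣ (m - ((i : ℕ) : ℤ)) := by
        intro hdvd
        obtain ⟨u, hu⟩ := hdvd
        obtain ⟨w, hw⟩ := hd0
        have hiq : ((i : ℕ) : ℤ) < ((p ^ n : ℕ) : ℤ) := by exact_mod_cast i.isLt
        have hiq0 : (0 : ℤ) ≤ ((i : ℕ) : ℤ) := by positivity
        have hiq' : ((i₀ : ℕ) : ℤ) < ((p ^ n : ℕ) : ℤ) := by exact_mod_cast i₀.isLt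
        have hiq0' : (0 : ℤ) ≤ ((i₀ : ℕ) : ℤ) := by positivity
        have hz : ((i₀ : ℕ) : ℤ) - ((i : ℕ) : ℤ) = ((p ^ n : ℕ) : ℤ) * (u - w) := by
          rw [mul_sub, ← hu, ← hw]; ring
        have huw : u - w = 0 := by
          rcases lt_trichotomy (u - w) 0 with h | h | h
          · have h1 : u - w ≤ -1 := by omega
            have h2 : ((p ^ n : ℕ) : ℤ) * (u - w) ≤ ((p ^ n : ℕ) : ℤ) * (-1) :=
              mul_le_mul_of_nonneg_left h1 (le_of_lt hqpos)
            omega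
          · exact h
          · have h1 : (1 : ℤ) ≤ u - w := by omega
            have h2 : ((p ^ n : ℕ) : ℤ) * 1 ≤ ((p ^ n : ℕ) : ℤ) * (u - w) :=
              mul_le_mul_of_nonneg_left h1 (le_of_lt hqpos)
            omega
        have : ((i : ℕ) : ℤ) = ((i₀ : ℕ) : ℤ) := by
          rw [huw] at hz
          omega
        have hnat : (i : ℕ) = (i₀ : ℕ) := by exact_mod_cast this
        exact hne (Fin.ext hnat)
      rw [if_neg hndvd, zero_mul]
    -- the main term
    have hdiv : ((p ^ n : ℕ) : ℤ) * ((m - ((i₀ : ℕ) : ℤ)) / ((p ^ n : ℕ) : ℤ))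
        + ((i₀ : ℕ) : ℤ) = m := by
      rw [Int.mul_ediv_cancel' hd0]
      ring
    calc f.coeff m
        = ∑ iv' : Fin D → Fin (p ^ n), (F (f.coeff m) iv') ^ (p ^ n) *
            ∏ j : Fin D, towerVar E estep D (j : ℕ) j.isLt ^ ((iv' j : ℕ)) :=
          hFspec (f.coeff m)
      _ = _ := by
          refine Finset.sum_congr rfl fun iv' _ => ?_
          rw [if_pos hd0, hdiv]

end TowerDecomp

/-- Let `𝓛` be a `d`-dimensional local field of mixed characteristic with
system of local uniformizers `T_1, …, T_{d−1}, π_𝓛` (its residue field, presented as the top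
of a Laurent series tower over a finite field `𝔽`, is `𝔽((T̄_1))…((T̄_{d−1}))`), and fix
`n ≥ 1`.  Then every `x ∈ O_𝓛` can be written as a `v_𝓛`-convergent series
`x = Σ_{k=0}^∞ Σ_{ī ∈ J_n} γ_{ī,k}^{p^n} · T_1^{i_1} ⋯ T_{d−1}^{i_{d−1}} · π_𝓛^k` with
`γ_{ī,k} ∈ O_𝓛`: for every `m ≥ 0` the difference between `x` and the partial sum over
`k ≤ m` lies in `π_𝓛^{m+1} O_𝓛`. -/
theorem additive_frobenius_series_representation
    (p : ℕ) (hp : p.Prime) (d : ℕ) (hd : 1 ≤ d)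
    (𝓛 : Type*) [Field 𝓛] [CharZero 𝓛]
    (v : 𝓛 → WithTop ℤ) (hv : IsDiscVal v)
    (π𝓛 : 𝓛) (hπ : v π𝓛 = 1)
    (𝔽 : Type) [Field 𝔽] [Fintype 𝔽] [CharP 𝔽 p]
    (E : ℕ → Type) [∀ j, Field (E j)] (estep : ∀ j, E (j + 1) ≃+* LaurentSeries (E j))
    (e0 : E 0 ≃+* 𝔽)
    (res : hv.subring →+* E (d - 1))
    (hres_surj : Function.Surjective res)
    (hres_ker : ∀ x : hv.subring, res x = 0 ↔ 1 ≤ v (x : 𝓛))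
    (T : Fin (d - 1) → hv.subring)
    (hT : ∀ j : Fin (d - 1), res (T j) = towerVar E estep (d - 1) j j.isLt)
    (n : ℕ) (hn : 1 ≤ n) :
    ∀ x : hv.subring,
      ∃ γ : ℕ → (Fin (d - 1) → Fin (p ^ n)) → hv.subring,
        ∀ m : ℕ,
          ((m : ℤ) + 1 : WithTop ℤ) ≤ v ((x : 𝓛) -
            ∑ k ∈ Finset.range (m + 1), ∑ iv : Fin (d - 1) → Fin (p ^ n),
              ((γ k iv : 𝓛)) ^ (p ^ n) *
                (∏ j : Fin (d - 1), ((T j : 𝓛)) ^ ((iv j : ℕ))) * π𝓛 ^ k) := by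
  haveI hfact : Fact p.Prime := ⟨hp⟩
  intro x
  have hq0 : p ^ n ≠ 0 := pow_ne_zero n hp.ne_zero
  have hπ0 : π𝓛 ≠ 0 := by
    intro h
    rw [h, hv.v_zero] at hπ
    exact (by simp : (⊤ : WithTop ℤ) ≠ 1) hπ
  -- one-step decomposition
  have step : ∀ z : hv.subring, ∃ (c : (Fin (d - 1) → Fin (p ^ n)) → hv.subring)
      (z' : hv.subring),
      (z : 𝓛) = (∑ iv : Fin (d - 1) → Fin (p ^ n),
        ((c iv : 𝓛)) ^ (p ^ n) * ∏ j : Fin (d - 1), ((T j : 𝓛)) ^ ((iv j : ℕ)))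
        + π𝓛 * (z' : 𝓛) := by
    intro z
    obtain ⟨cE, hcE⟩ := towerDecomp E estep p hfact n 𝔽 e0 (d - 1) (res z)
    choose lift hlift using hres_surj
    set c : (Fin (d - 1) → Fin (p ^ n)) → hv.subring := fun iv => lift (cE iv) with hc
    set s : hv.subring := ∑ iv : Fin (d - 1) → Fin (p ^ n),
      (c iv) ^ (p ^ n) * ∏ j : Fin (d - 1), (T j) ^ ((iv j : ℕ)) with hs
    have hress : res (z - s) = 0 := by
      rw [map_sub, hs, map_sum]
      have heach : ∀ iv : Fin (d - 1) → Fin (p ^ n),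
          res ((c iv) ^ (p ^ n) * ∏ j : Fin (d - 1), (T j) ^ ((iv j : ℕ)))
          = (cE iv) ^ (p ^ n) *
            ∏ j : Fin (d - 1), towerVar E estep (d - 1) (j : ℕ) j.isLt ^ ((iv j : ℕ)) := by
        intro iv
        rw [map_mul, map_pow, hc, hlift, map_prod]
        congr 1
        refine Finset.prod_congr rfl fun j _ => ?_
        rw [map_pow, hT]
      rw [Finset.sum_congr rfl fun iv _ => heach iv, ← hcE, sub_self]
    have hv1 : (1 : WithTop ℤ) ≤ v (((z - s : hv.subring) : 𝓛)) := (hres_ker _).mp hress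
    have hzs : (((z - s : hv.subring) : 𝓛)) = (z : 𝓛) - (s : 𝓛) := by push_cast; ring
    set w : 𝓛 := ((z : 𝓛) - (s : 𝓛)) / π𝓛 with hw
    have hwmul : π𝓛 * w = (z : 𝓛) - (s : 𝓛) := by
      rw [hw]; field_simp
    have hvw : 0 ≤ v w := by
      have hval : v ((z : 𝓛) - (s : 𝓛)) = 1 + v w := by
        rw [← hwmul, hv.map_mul, hπ]
      rw [hzs, hval] at hv1
      cases hvw0 : v w with
      | top => exact le_top
      | coe a =>
        rw [hvw0] at hv1
        have h2 : (1 : ℤ) ≤ 1 + a := by exact_mod_cast hv1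
        exact_mod_cast (by omega : (0 : ℤ) ≤ a)
    refine ⟨c, ⟨w, hvw⟩, ?_⟩
    have hscoe : ((s : hv.subring) : 𝓛) = ∑ iv : Fin (d - 1) → Fin (p ^ n),
        ((c iv : 𝓛)) ^ (p ^ n) * ∏ j : Fin (d - 1), ((T j : 𝓛)) ^ ((iv j : ℕ)) := by
      rw [hs]; push_cast; rfl
    rw [← hscoe]
    have : ((⟨w, hvw⟩ : hv.subring) : 𝓛) = w := rfl
    rw [this, hwmul]
    ring
  choose stepc stepx hstep using step
  set xs : ℕ → hv.subring := fun k => Nat.rec x (fun _ xk => stepx xk) k with hxs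
  have hxsS : ∀ k, xs (k + 1) = stepx (xs k) := fun k => rfl
  refine ⟨fun k => stepc (xs k), ?_⟩
  have hvpow : ∀ k : ℕ, v (π𝓛 ^ k) = ((k : ℤ) : WithTop ℤ) := by
    intro k
    induction k with
    | zero => simpa using hv.v_one
    | succ k ih =>
      rw [pow_succ, hv.map_mul, ih, hπ]
      push_cast
      rfl
  have key : ∀ m : ℕ, (x : 𝓛) -
      ∑ k ∈ Finset.range m, ∑ iv : Fin (d - 1) → Fin (p ^ n),
        ((stepc (xs k) iv : 𝓛)) ^ (p ^ n) *
          (∏ j : Fin (d - 1), ((T j : 𝓛)) ^ ((iv j : ℕ))) * π𝓛 ^ k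
      = π𝓛 ^ m * ((xs m : hv.subring) : 𝓛) := by
    intro m
    induction m with
    | zero => simp [hxs]
    | succ m ih =>
      rw [Finset.sum_range_succ, ← sub_sub, ih, ← Finset.sum_mul, hxsS m,
        hstep (xs m)]
      ring
  intro m
  rw [key (m + 1), hv.map_mul, hvpow (m + 1)]
  have h0 : 0 ≤ v ((xs (m + 1) : hv.subring) : 𝓛) :=
    (hv.mem_subring_iff _).mp (xs (m + 1)).2
  have hcast : ((m : ℤ) + 1 : WithTop ℤ) = (((m + 1 : ℕ) : ℤ) : WithTop ℤ) := by
    push_cast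
    rfl
  rw [hcast]
  exact le_add_of_nonneg_right h0
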